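/- Let f : ℝⁿ → E be a function into a Banach space such that for every r ≤ m and every non-decreasing multi-sequence l₁ ≤ l₂ ≤ … ≤ l_r the iterated partial derivative ∂ʳf/∂x_{l₁}…∂x_{l_r} exists and is continuous. Then f is of class Cᵐ (all mixed partial derivatives up to order m exist, are continuous, and are independent of the order of differentiation). -/

import Mathlib

open Set Filter Asymptotics



section Sorting
variable {n : ℕ} {α : Type*} [LinearOrder α]

lemma mono_unique {r : ℕ} {l₁ l₂ : Fin r → α} (h₁ : Monotone l₁) (h₂ : Monotone l₂)
    (hp : (List.ofFn l₁).Perm (List.ofFn l₂)) : l₁ = l₂ :=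
  List.ofFn_injective (List.Perm.eq_of_sortedLE
    (List.sortedLE_ofFn_iff.2 h₁) (List.sortedLE_ofFn_iff.2 h₂) hp)

/-- monotone rearrangement of a tuple -/
def sortT {r : ℕ} (l : Fin r → α) : Fin r → α := l ∘ Tuple.sort l

lemma sortT_mono {r : ℕ} (l : Fin r → α) : Monotone (sortT l) := Tuple.monotone_sort l

lemma sortT_perm {r : ℕ} (l : Fin r → α) : (List.ofFn (sortT l)).Perm (List.ofFn l) :=
  (Tuple.sort l).ofFn_comp_perm l

lemma sortT_eq_of_mono {r : ℕ} {l : Fin r → α} (h : Monotone l) : sortT l = l :=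
  mono_unique (sortT_mono l) h (sortT_perm l)

lemma monotone_snoc {r : ℕ} {s : Fin r → α} (hs : Monotone s) {a : α} (ha : ∀ i, s i ≤ a) :
    Monotone (Fin.snoc s a) := by
  intro p q hpq
  induction q using Fin.lastCases with
  | last =>
    rw [Fin.snoc_last]
    induction p using Fin.lastCases with
    | last => rw [Fin.snoc_last]
    | cast p => rw [Fin.snoc_castSucc]; exact ha p
  | cast q =>
    induction p using Fin.lastCases with
    | last => exact absurd hpq (not_le.2 (Fin.castSucc_lt_last q))
    | cast p =>
      rw [Fin.snoc_castSucc, Fin.snoc_castSucc]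
      exact hs (Fin.castSucc_le_castSucc_iff.1 hpq)

lemma ofFn_snoc {r : ℕ} (s : Fin r → α) (a : α) :
    List.ofFn (Fin.snoc s a) = List.ofFn s ++ [a] := by
  rw [List.ofFn_succ']
  simp [Fin.snoc_comp_castSucc, List.concat_eq_append]

lemma ofFn_cons {r : ℕ} (a : α) (s : Fin r → α) :
    List.ofFn (Fin.cons a s) = a :: List.ofFn s := by
  rw [List.ofFn_succ]
  simp [Fin.cons_succ]

end Sorting

section Analysis
variable {n : ℕ} {E : Type*} [NormedAddCommGroup E] [NormedSpace ℝ E]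




lemma lineDeriv_shift {F G : (Fin n → ℝ) → E} {v : Fin n → ℝ}
    (h : ∀ y, HasLineDerivAt ℝ F (G y) y v) (x : Fin n → ℝ) (t : ℝ) :
    HasDerivAt (fun τ : ℝ => F (x + τ • v)) (G (x + t • v)) t := by
  have h1 : HasDerivAt (fun s : ℝ => F (x + t • v + s • v)) (G (x + t • v)) 0 := h (x + t • v)
  have h2 : HasDerivAt (fun τ : ℝ => τ - t) 1 t := by
    simpa using (hasDerivAt_id t).sub_const t
  have h3 := HasDerivAt.scomp_of_eq t h1 h2 (by simp)
  have e : (fun s : ℝ => F (x + t • v + s • v)) ∘ (fun τ : ℝ => τ - t)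
      = fun τ : ℝ => F (x + τ • v) := by
    funext τ
    simp only [Function.comp_apply]
    congr 1
    rw [sub_smul]
    abel
  rw [e] at h3
  simpa using h3

lemma mvt_seg {ψ ψ' : ℝ → E} {C : ℝ}
    (h : ∀ σ ∈ Icc (0:ℝ) 1, HasDerivAt ψ (ψ' σ) σ) (hC : ∀ σ ∈ Icc (0:ℝ) 1, ‖ψ' σ‖ ≤ C) :
    ‖ψ 1 - ψ 0‖ ≤ C := by
  have := norm_image_sub_le_of_norm_deriv_le_segment' (f := ψ) (f' := ψ') (a := 0) (b := 1)
    (fun σ hσ => (h σ hσ).hasDerivWithinAt) (fun σ hσ => hC σ ⟨hσ.1, hσ.2.le⟩)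
    1 (by norm_num)
  simpa using this

lemma mvt_line {F G : (Fin n → ℝ) → E} {v : Fin n → ℝ}
    (h : ∀ y, HasLineDerivAt ℝ F (G y) y v) (z : Fin n → ℝ) (t : ℝ) (c : E) {ε : ℝ}
    (hb : ∀ s : ℝ, |s| ≤ |t| → ‖G (z + s • v) - c‖ ≤ ε) :
    ‖F (z + t • v) - F z - t • c‖ ≤ ε * |t| := by
  set ψ : ℝ → E := fun σ => F (z + (σ * t) • v) - (σ * t) • c with hψdef
  have hψ : ∀ σ : ℝ, HasDerivAt ψ (t • (G (z + (σ * t) • v) - c)) σ := by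
    intro σ
    have h1 : HasDerivAt (fun τ : ℝ => F (z + τ • v)) (G (z + (σ * t) • v)) (σ * t) :=
      lineDeriv_shift h z (σ * t)
    have h2 : HasDerivAt (fun σ : ℝ => σ * t) t σ := by
      simpa using (hasDerivAt_id σ).mul_const t
    have h3 : HasDerivAt (fun σ : ℝ => F (z + (σ * t) • v)) (t • G (z + (σ * t) • v)) σ :=
      by have h5 := HasDerivAt.scomp σ h1 h2; exact h5
    have h4 : HasDerivAt (fun σ : ℝ => (σ * t) • c) (t • c) σ := h2.smul_const c
    have h5 := h3.sub h4; rw [← smul_sub] at h5; exact h5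
  have key := mvt_seg (ψ := ψ) (ψ' := fun σ => t • (G (z + (σ * t) • v) - c))
    (C := ε * |t|) (fun σ hσ => hψ σ) ?_
  · have e1 : ψ 1 = F (z + t • v) - t • c := by simp [hψdef]
    have e0 : ψ 0 = F z := by simp [hψdef]
    rw [e1, e0] at key
    calc ‖F (z + t • v) - F z - t • c‖ = ‖F (z + t • v) - t • c - F z‖ := by
          rw [sub_right_comm]
      _ ≤ ε * |t| := key
  · intro σ hσ
    rw [norm_smul, Real.norm_eq_abs, mul_comm]
    have hε : (0:ℝ) ≤ ε := le_trans (norm_nonneg _) (hb 0 (by simp))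
    have : ‖G (z + (σ * t) • v) - c‖ ≤ ε := by
      apply hb
      rw [abs_mul]
      calc |σ| * |t| ≤ 1 * |t| := by
            apply mul_le_mul_of_nonneg_right _ (abs_nonneg t)
            rw [abs_le]; exact ⟨by linarith [hσ.1], hσ.2⟩
        _ = |t| := one_mul _
    exact mul_le_mul_of_nonneg_right this (abs_nonneg t)





lemma schwarz {u p q w : (Fin n → ℝ) → E} {va vj : Fin n → ℝ}
    (hp : ∀ x, HasLineDerivAt ℝ u (p x) x va)
    (hq : ∀ x, HasLineDerivAt ℝ u (q x) x vj)
    (hqa : ∀ x, HasLineDerivAt ℝ q (w x) x va)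
    (hw : Continuous w) (hva : ‖va‖ ≤ 1) (hvj : ‖vj‖ ≤ 1)
    (x : Fin n → ℝ) : HasLineDerivAt ℝ p (w x) x vj := by
  -- main estimate: for every ε > 0 there is δ > 0 such that for |t| < δ,
  -- ‖p (x + t vj) - p x - t • w x‖ ≤ ε * |t|
  have main : ∀ ε : ℝ, 0 < ε → ∃ δ : ℝ, 0 < δ ∧ ∀ t : ℝ, |t| < δ →
      ‖p (x + t • vj) - p x - t • w x‖ ≤ ε * |t| := by
    intro ε hε
    obtain ⟨δ, hδ, hδw⟩ : ∃ δ > 0, ∀ y : Fin n → ℝ, dist y x < δ → ‖w y - w x‖ ≤ ε := by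
      have := Metric.continuousAt_iff.1 (hw.continuousAt (x := x)) ε hε
      obtain ⟨δ, hδ, h⟩ := this
      exact ⟨δ, hδ, fun y hy => le_of_lt (by simpa [dist_eq_norm] using h hy)⟩
    refine ⟨δ / 2, by linarith, fun t ht => ?_⟩
    -- Step 1: double difference estimate
    have step1 : ∀ h : ℝ, |h| < δ / 2 →
        ‖(u (x + t • vj + h • va) - u (x + t • vj)) - (u (x + h • va) - u x)
          - (t * h) • w x‖ ≤ ε * |h| * |t| := by
      intro h hh
      -- inner estimate
      have inner : ∀ τ : ℝ, |τ| ≤ |t| →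
          ‖(q (x + τ • vj + h • va) - q (x + τ • vj)) - h • w x‖ ≤ ε * |h| := by
        intro τ hτ
        have := mvt_line (F := q) (G := w) (v := va) hqa (x + τ • vj) h (w x) (ε := ε) ?_
        · calc ‖(q (x + τ • vj + h • va) - q (x + τ • vj)) - h • w x‖
              = ‖q (x + τ • vj + h • va) - q (x + τ • vj) - h • w x‖ := by rw [sub_sub]
            _ ≤ ε * |h| := this
        · intro s hs
          apply hδw
          have : x + τ • vj + s • va - x = τ • vj + s • va := by abel
          rw [dist_eq_norm, this]
          calc ‖τ • vj + s • va‖ ≤ ‖τ • vj‖ + ‖s • va‖ := norm_add_le _ _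
            _ ≤ |τ| * 1 + |s| * 1 := by
                gcongr <;> rw [norm_smul, Real.norm_eq_abs] <;>
                  exact mul_le_mul_of_nonneg_left (by assumption) (abs_nonneg _)
            _ < δ := by
                have h1 : |s| ≤ |h| := hs
                nlinarith [abs_nonneg τ, abs_nonneg s]
      -- outer estimate via MVT in direction vj applied to y ↦ u (y + h·va) - u y
      have houter : ∀ y, HasLineDerivAt ℝ (fun z => u (z + h • va) - u z)
          (q (y + h • va) - q y) y vj := by
        intro y
        have h1 : HasLineDerivAt ℝ (fun z => u (z + h • va)) (q (y + h • va)) y vj := by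
          unfold HasLineDerivAt at *
          have := hq (y + h • va)
          convert this using 2 with τ
          · congr 1; abel
        exact h1.sub (hq y)
      have := mvt_line (F := fun z => u (z + h • va) - u z)
        (G := fun y => q (y + h • va) - q y) (v := vj) houter x t (h • w x)
        (ε := ε * |h|) (fun s hs => inner s hs)
      calc ‖(u (x + t • vj + h • va) - u (x + t • vj)) - (u (x + h • va) - u x)
            - (t * h) • w x‖
          = ‖(u (x + t • vj + h • va) - u (x + t • vj)) - (u (x + h • va) - u x)
            - t • h • w x‖ := by rw [mul_smul]
        _ ≤ ε * |h| * |t| := this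
    -- Step 2: divide by h and let h → 0
    rcases eq_or_ne t 0 with rfl | ht0
    · simp
    have lim : Tendsto (fun h : ℝ =>
        h⁻¹ • ((u (x + t • vj + h • va) - u (x + t • vj)) - (u (x + h • va) - u x)
          - (t * h) • w x))
        (nhdsWithin 0 {0}ᶜ) (nhds (p (x + t • vj) - p x - t • w x)) := by
      have l1 : Tendsto (fun h : ℝ => h⁻¹ • (u (x + t • vj + h • va) - u (x + t • vj)))
          (nhdsWithin 0 {0}ᶜ) (nhds (p (x + t • vj))) := by
        have := hasDerivAt_iff_tendsto_slope.1 (hp (x + t • vj))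
        simpa [slope_fun_def, vsub_eq_sub, sub_zero, zero_smul, add_zero] using this
      have l2 : Tendsto (fun h : ℝ => h⁻¹ • (u (x + h • va) - u x))
          (nhdsWithin 0 {0}ᶜ) (nhds (p x)) := by
        have := hasDerivAt_iff_tendsto_slope.1 (hp x)
        simpa [slope_fun_def, vsub_eq_sub, sub_zero, zero_smul, add_zero] using this
      have l3 : Tendsto (fun h : ℝ => h⁻¹ • ((t * h) • w x))
          (nhdsWithin 0 {0}ᶜ) (nhds (t • w x)) := by
        apply Tendsto.congr' _ tendsto_const_nhds
        filter_upwards [self_mem_nhdsWithin] with h hh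
        rw [smul_smul]
        congr 1
        have hh' : h ≠ 0 := hh
        field_simp
      have := (l1.sub l2).sub l3
      simpa [smul_sub] using this
    have : ‖p (x + t • vj) - p x - t • w x‖ ≤ ε * |t| := by
      apply le_of_tendsto lim.norm
      filter_upwards [self_mem_nhdsWithin,
        mem_nhdsWithin_of_mem_nhds (Metric.ball_mem_nhds (0:ℝ) (by positivity : (0:ℝ) < δ/2))] with
        h hh1 hh2
      have hball : |h| < δ / 2 := by simpa [Real.norm_eq_abs] using mem_ball_zero_iff.1 hh2
      have hne : h ≠ 0 := hh1
      have hstep := step1 h hball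
      have hane : |h| ≠ 0 := abs_ne_zero.2 hne
      rw [norm_smul, Real.norm_eq_abs, abs_inv]
      calc |h|⁻¹ * ‖u (x + t • vj + h • va) - u (x + t • vj) - (u (x + h • va) - u x)
            - (t * h) • w x‖ ≤ |h|⁻¹ * (ε * |h| * |t|) := by gcongr
        _ = ε * |t| := by field_simp
    exact this
  -- conclude HasLineDerivAt
  unfold HasLineDerivAt
  rw [hasDerivAt_iff_isLittleO]
  rw [isLittleO_iff]
  intro c hc
  obtain ⟨δ, hδ, hbound⟩ := main c hc
  rw [Metric.eventually_nhds_iff]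
  refine ⟨δ, hδ, fun t ht => ?_⟩
  have := hbound t (by simpa [Real.dist_eq] using ht)
  simpa [Real.norm_eq_abs, mul_comm] using this





lemma hasFDerivAt_of_partials {f : (Fin n → ℝ) → E} {g : Fin n → (Fin n → ℝ) → E}
    (hd : ∀ i y, HasLineDerivAt ℝ f (g i y) y (Pi.single i 1))
    (hc : ∀ i, Continuous (g i)) (x : Fin n → ℝ) :
    HasFDerivAt f (∑ i, (ContinuousLinearMap.proj (R := ℝ) (φ := fun _ : Fin n => ℝ)
      i).smulRight (g i x)) x := by
  rw [hasFDerivAt_iff_isLittleO_nhds_zero]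
  rw [isLittleO_iff]
  intro ε hε
  have hε' : 0 < ε / (n + 1) := by positivity
  -- uniform continuity bound near x
  have hev : ∀ᶠ y in nhds x, ∀ i, ‖g i y - g i x‖ ≤ ε / (n + 1) := by
    rw [eventually_all]
    intro i
    have := Metric.continuousAt_iff.1 ((hc i).continuousAt (x := x)) (ε / (n+1)) hε'
    obtain ⟨δ, hδ, h⟩ := this
    rw [Metric.eventually_nhds_iff]
    exact ⟨δ, hδ, fun y hy => le_of_lt (by simpa [dist_eq_norm] using h hy)⟩
  obtain ⟨δ, hδ, hδg⟩ := Metric.eventually_nhds_iff.1 hev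
  rw [Metric.eventually_nhds_iff]
  refine ⟨δ, hδ, fun v hv => ?_⟩
  have hvlt : ‖v‖ < δ := by simpa [dist_eq_norm] using hv
  -- telescoping points
  set e : Fin n → (Fin n → ℝ) := fun i => Pi.single i 1 with he
  set z : ℕ → (Fin n → ℝ) := fun k => fun j => if (j : ℕ) < k then x j + v j else x j with hz
  have hz0 : z 0 = x := by funext j; simp [hz]
  have hzn : z n = x + v := by funext j; simp [hz, j.isLt]
  have hzdist : ∀ (k : ℕ) (i : Fin n) (s : ℝ), |s| ≤ ‖v‖ → (i : ℕ) = k →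
      dist (z k + s • e i) x < δ := by
    intro k i s hs hik
    rw [dist_eq_norm]
    have : ∀ j : Fin n, ‖(z k + s • e i - x) j‖ ≤ ‖v‖ := by
      intro j
      rcases eq_or_ne j i with rfl | hj
      · have : (z k + s • e j - x) j = s := by
          simp [hz, he, hik.symm, Pi.single_apply]
        rw [this]; exact hs.trans le_rfl
      · have : (z k + s • e i - x) j
            = if (j : ℕ) < k then v j else 0 := by
          simp [hz, he, Pi.single_apply, hj]
          split <;> ring
        rw [this]
        split
        · exact norm_le_pi_norm v j
        · simp
    calc ‖z k + s • e i - x‖ ≤ ‖v‖ := by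
          rw [pi_norm_le_iff_of_nonneg (norm_nonneg v)]; exact this
      _ < δ := hvlt
  -- step increment
  have hstep : ∀ i : Fin n, z ((i : ℕ) + 1) = z (i : ℕ) + v i • e i := by
    intro i
    funext j
    rcases eq_or_ne j i with rfl | hj
    · simp [hz, he, Pi.single_apply]
    · have hji : (j : ℕ) ≠ (i : ℕ) := fun h => hj (Fin.ext h)
      simp only [hz, he, Pi.add_apply, Pi.smul_apply, Pi.single_apply, if_neg hj,
        smul_eq_mul, mul_zero, add_zero]
      rcases Nat.lt_trichotomy (j : ℕ) (i : ℕ) with h | h | h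
      · simp [h, Nat.lt_succ_iff, Nat.le_of_lt h]
      · exact absurd h hji
      · have h1 : ¬ (j : ℕ) < (i : ℕ) := by omega
        have h2 : ¬ (j : ℕ) < (i : ℕ) + 1 := by omega
        simp [h1, h2]
  -- telescoping identity
  have tele : ∑ i : Fin n, (f (z ((i : ℕ) + 1)) - f (z (i : ℕ))) = f (x + v) - f x := by
    rw [Fin.sum_univ_eq_sum_range (fun k => f (z (k + 1)) - f (z k)) n,
      Finset.sum_range_sub (fun k => f (z k)) n, hz0, hzn]
  have hL : (∑ i, (ContinuousLinearMap.proj (R := ℝ) (φ := fun _ : Fin n => ℝ)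
      i).smulRight (g i x)) v = ∑ i : Fin n, v i • g i x := by
    simp [ContinuousLinearMap.sum_apply]
  have key : f (x + v) - f x - (∑ i, (ContinuousLinearMap.proj (R := ℝ)
      (φ := fun _ : Fin n => ℝ) i).smulRight (g i x)) v
      = ∑ i : Fin n, (f (z ((i : ℕ) + 1)) - f (z (i : ℕ)) - v i • g i x) := by
    rw [hL, ← tele, Finset.sum_sub_distrib, Finset.sum_sub_distrib, Finset.sum_sub_distrib]
  have bound : ∀ i : Fin n,
      ‖f (z ((i : ℕ) + 1)) - f (z (i : ℕ)) - v i • g i x‖ ≤ (ε / (n + 1)) * ‖v‖ := by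
    intro i
    have hvi : |v i| ≤ ‖v‖ := by
      rw [← Real.norm_eq_abs]; exact norm_le_pi_norm v i
    have hmvt := mvt_line (F := f) (G := g i) (v := e i) (fun y => hd i y)
      (z (i : ℕ)) (v i) (g i x) (ε := ε / (n + 1)) ?_
    · rw [hstep i]
      calc ‖f (z (i : ℕ) + v i • e i) - f (z (i : ℕ)) - v i • g i x‖
          ≤ (ε / (n + 1)) * |v i| := hmvt
        _ ≤ (ε / (n + 1)) * ‖v‖ := by gcongr
    · intro s hs
      exact hδg (hzdist (i : ℕ) i s (hs.trans hvi) rfl) i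
  calc ‖f (x + v) - f x - (∑ i, (ContinuousLinearMap.proj (R := ℝ)
      (φ := fun _ : Fin n => ℝ) i).smulRight (g i x)) v‖
      = ‖∑ i : Fin n, (f (z ((i : ℕ) + 1)) - f (z (i : ℕ)) - v i • g i x)‖ := by rw [key]
    _ ≤ ∑ _i : Fin n, (ε / (n + 1)) * ‖v‖ := by
        refine (norm_sum_le _ _).trans (Finset.sum_le_sum fun i _ => bound i)
    _ = (n : ℝ) * ((ε / (n + 1)) * ‖v‖) := by
        simp [Finset.sum_const, Finset.card_univ, nsmul_eq_mul]
    _ ≤ ε * ‖v‖ := by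
        have hεeq : ε = (ε / (n + 1)) * ((n : ℝ) + 1) := by field_simp
        have hc : 0 ≤ ε / ((n : ℝ) + 1) := hε'.le
        nlinarith [norm_nonneg v, mul_nonneg hc (norm_nonneg v)]







lemma norm_single_le_one (i : Fin n) : ‖(Pi.single i 1 : Fin n → ℝ)‖ ≤ 1 := by
  rw [pi_norm_le_iff_of_nonneg zero_le_one]
  intro j
  rw [Pi.single_apply]
  split <;> simp

/-- The key commutation lemma: the (sorted) partial derivatives can be extended by
differentiation in *any* direction, not just directions larger than all previous ones. -/
lemma commute_lemma {m : ℕ}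
    (f : (Fin n → ℝ) → E)
    (D : (r : ℕ) → (Fin r → Fin n) → ((Fin n → ℝ) → E))
    (hderiv : ∀ r : ℕ, r < m → ∀ l : Fin (r + 1) → Fin n, Monotone l →
      ∀ x : Fin n → ℝ,
        HasLineDerivAt ℝ (D r (l ∘ Fin.castSucc)) (D (r + 1) l x) x
          (Pi.single (l (Fin.last r)) 1))
    (hcont : ∀ r : ℕ, r ≤ m → ∀ l : Fin r → Fin n, Monotone l → Continuous (D r l)) :
    ∀ r : ℕ, r < m → ∀ s : Fin r → Fin n, Monotone s → ∀ (j : Fin n) (x : Fin n → ℝ),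
      HasLineDerivAt ℝ (D r s) (D (r + 1) (sortT (Fin.snoc s j)) x) x (Pi.single j 1) := by
  intro r
  induction r with
  | zero =>
    intro hr s hs j x
    have hmono : Monotone (Fin.snoc s j : Fin 1 → Fin n) := fun a b _ => by
      have : a = b := Fin.ext (by omega)
      rw [this]
    have h := hderiv 0 hr (Fin.snoc s j) hmono x
    rw [sortT_eq_of_mono hmono]
    have e1 : (Fin.snoc s j : Fin 1 → Fin n) ∘ Fin.castSucc = s := by
      funext i; exact i.elim0
    have e2 : (Fin.snoc s j : Fin 1 → Fin n) (Fin.last 0) = j := Fin.snoc_last _ _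
    rwa [e1, e2] at h
  | succ r IH =>
    intro hr s hs j x
    set a := s (Fin.last r) with ha
    rcases le_or_gt a j with haj | hja
    · -- easy case : differentiation in a direction at least as large as all previous ones
      have hmono : Monotone (Fin.snoc s j) :=
        monotone_snoc hs (fun i => (hs (Fin.le_last i)).trans haj)
      have h := hderiv (r + 1) hr (Fin.snoc s j) hmono x
      rw [sortT_eq_of_mono hmono]
      have e1 : (Fin.snoc s j : Fin (r + 2) → Fin n) ∘ Fin.castSucc = s := by
        funext i; exact Fin.snoc_castSucc _ _ _
      rwa [e1, Fin.snoc_last] at h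
    · -- hard case : use Schwarz's theorem
      set t : Fin r → Fin n := s ∘ Fin.castSucc with htdef
      have hts : Monotone t := fun p q hpq => hs (Fin.castSucc_le_castSucc_iff.2 hpq)
      have hta : ∀ i, t i ≤ a := fun i => hs (Fin.le_last _)
      -- u := D r t, with ∂ₐ u = D (r+1) s
      have hu : ∀ y, HasLineDerivAt ℝ (D r t) (D (r + 1) s y) y (Pi.single a 1) :=
        fun y => hderiv r (by omega) s hs y
      -- ∂ⱼ u = D (r+1) s' by the induction hypothesis
      have hq : ∀ y, HasLineDerivAt ℝ (D r t)
          (D (r + 1) (sortT (Fin.snoc t j)) y) y (Pi.single j 1) :=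
        fun y => IH (by omega) t hts j y
      set s' : Fin (r + 1) → Fin n := sortT (Fin.snoc t j) with hs'def
      have hs' : Monotone s' := sortT_mono _
      have hsnoc_le : ∀ k : Fin (r + 1), (Fin.snoc t j : Fin (r + 1) → Fin n) k ≤ a := by
        intro k
        induction k using Fin.lastCases with
        | last => rw [Fin.snoc_last]; exact hja.le
        | cast k => rw [Fin.snoc_castSucc]; exact hta k
      have hs'a : ∀ i, s' i ≤ a := fun i => hsnoc_le _
      have hmono2 : Monotone (Fin.snoc s' a) := monotone_snoc hs' hs'a
      have hqa : ∀ y, HasLineDerivAt ℝ (D (r + 1) s')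
          (D (r + 2) (Fin.snoc s' a) y) y (Pi.single a 1) := by
        intro y
        have h := hderiv (r + 1) hr (Fin.snoc s' a) hmono2 y
        have e1 : (Fin.snoc s' a : Fin (r + 2) → Fin n) ∘ Fin.castSucc = s' := by
          funext i; exact Fin.snoc_castSucc _ _ _
        rwa [e1, Fin.snoc_last] at h
      have hw : Continuous (D (r + 2) (Fin.snoc s' a)) := hcont (r + 2) (by omega) _ hmono2
      have hsch := schwarz hu hq hqa hw (norm_single_le_one a) (norm_single_le_one j) x
      -- identify the resulting multi-index
      have eqt : Fin.snoc s' a = sortT (Fin.snoc s j) := by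
        apply mono_unique hmono2 (sortT_mono _)
        have hsform : Fin.snoc t a = s := by
          funext k
          induction k using Fin.lastCases with
          | last => rw [Fin.snoc_last, ha]
          | cast k => rw [Fin.snoc_castSucc]; rfl
        have p1 : List.Perm (List.ofFn (Fin.snoc s' a)) (List.ofFn (Fin.snoc t j) ++ [a]) := by
          rw [ofFn_snoc]
          exact (sortT_perm (Fin.snoc t j)).append_right _
        have p2 : List.Perm (List.ofFn (Fin.snoc t j) ++ [a]) (List.ofFn (Fin.snoc s j)) := by
          rw [ofFn_snoc, ofFn_snoc, ← hsform, ofFn_snoc, List.append_assoc, List.append_assoc]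
          exact List.Perm.append_left _ (List.Perm.swap a j [])
        exact (p1.trans p2).trans (sortT_perm _).symm
      have efin : D (r + 1 + 1) (sortT (Fin.snoc s j)) x = D (r + 2) (Fin.snoc s' a) x := by
        rw [eqt]
      rw [efin]
      exact hsch







lemma aux_main (m : ℕ) : ∀ (f : (Fin n → ℝ) → E)
    (D : (r : ℕ) → (Fin r → Fin n) → ((Fin n → ℝ) → E)),
    (∀ l : Fin 0 → Fin n, D 0 l = f) →
    (∀ r : ℕ, r < m → ∀ l : Fin (r + 1) → Fin n, Monotone l →
      ∀ x : Fin n → ℝ,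
        HasLineDerivAt ℝ (D r (l ∘ Fin.castSucc)) (D (r + 1) l x) x
          (Pi.single (l (Fin.last r)) 1)) →
    (∀ r : ℕ, r ≤ m → ∀ l : Fin r → Fin n, Monotone l → Continuous (D r l)) →
    ContDiff ℝ (m : ℕ∞) f := by
  induction m with
  | zero =>
    intro f D hD0 hderiv hcont
    have h := hcont 0 le_rfl Fin.elim0 (fun a => a.elim0)
    rw [hD0] at h
    exact contDiff_zero.2 h
  | succ m ih =>
    intro f D hD0 hderiv hcont
    have CL := commute_lemma f D hderiv hcont
    set g : Fin n → (Fin n → ℝ) → E := fun i => D 1 (fun _ => i) with hg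
    have hgd : ∀ (i : Fin n) (y : Fin n → ℝ), HasLineDerivAt ℝ f (g i y) y (Pi.single i 1) := by
      intro i y
      have h := hderiv 0 (Nat.succ_pos m) (fun _ => i) monotone_const y
      rwa [hD0] at h
    have hgc : ∀ i, Continuous (g i) := fun i => hcont 1 (by omega) _ monotone_const
    have hL := hasFDerivAt_of_partials hgd hgc
    have hdiff : Differentiable ℝ f := fun x => (hL x).differentiableAt
    have hfd : fderiv ℝ f = fun x => ∑ i, (ContinuousLinearMap.proj (R := ℝ)
        (φ := fun _ : Fin n => ℝ) i).smulRight (g i x) := funext fun x => (hL x).fderiv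
    -- each first partial derivative is Cᵐ by the induction hypothesis
    have hgC : ∀ i, ContDiff ℝ (m : ℕ∞) (g i) := by
      intro i
      apply ih (g i) (fun r l => D (r + 1) (sortT (Fin.cons i l)))
      · -- order-0 identification
        intro l
        have : sortT (Fin.cons i l) = fun _ : Fin 1 => i := by
          funext k
          show (Fin.cons i l : Fin 1 → Fin n) (Tuple.sort _ k) = i
          have h0 : Tuple.sort (Fin.cons i l : Fin 1 → Fin n) k = 0 := Fin.ext (by omega)
          rw [h0]
          rfl
        rw [this]
      · -- derivatives
        intro r hrm l hl x
        have h := CL (r + 1) (by omega) (sortT (Fin.cons i (l ∘ Fin.castSucc)))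
          (sortT_mono _) (l (Fin.last r)) x
        have eqt : sortT (Fin.snoc (sortT (Fin.cons i (l ∘ Fin.castSucc))) (l (Fin.last r)))
            = sortT (Fin.cons i l) := by
          apply mono_unique (sortT_mono _) (sortT_mono _)
          have hsnocl : Fin.snoc (l ∘ Fin.castSucc) (l (Fin.last r)) = l := by
            funext k
            induction k using Fin.lastCases with
            | last => rw [Fin.snoc_last]
            | cast k => rw [Fin.snoc_castSucc]; rfl
          have p1 : List.Perm (List.ofFn (sortT (Fin.snoc (sortT (Fin.cons i (l ∘ Fin.castSucc)))
              (l (Fin.last r))))) (List.ofFn (sortT (Fin.cons i (l ∘ Fin.castSucc)))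
                ++ [l (Fin.last r)]) := by
            rw [← ofFn_snoc]
            exact sortT_perm _
          have p2 : List.Perm (List.ofFn (sortT (Fin.cons i (l ∘ Fin.castSucc)))
              ++ [l (Fin.last r)]) (List.ofFn (Fin.cons i l)) := by
            have := (sortT_perm (Fin.cons i (l ∘ Fin.castSucc))).append_right [l (Fin.last r)]
            refine this.trans ?_
            rw [ofFn_cons, ofFn_cons, ← hsnocl, ofFn_snoc]
            simp
          exact (p1.trans p2).trans (sortT_perm _).symm
        rwa [eqt] at h
      · -- continuity
        intro r hrm l hl
        exact hcont (r + 1) (by omega) _ (sortT_mono _)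
    -- assemble
    have hfC : ContDiff ℝ (m : ℕ∞) (fderiv ℝ f) := by
      rw [hfd]
      apply ContDiff.sum
      intro i _
      exact ((ContinuousLinearMap.smulRightL ℝ (Fin n → ℝ) E
        (ContinuousLinearMap.proj i)).contDiff).comp (hgC i)
    have hcast : (((m + 1 : ℕ) : ℕ∞) : WithTop ℕ∞) = ((m : ℕ∞) : WithTop ℕ∞) + 1 := by
      push_cast
      rfl
    rw [hcast]
    refine contDiff_succ_iff_fderiv.2 ⟨hdiff, ?_, hfC⟩
    intro h
    exact absurd h (by simp)

end Analysis

/- Statement 9: if all iterated partial derivatives of f taken in non-decreasing variable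
order up to order m exist and are continuous, then f is Cᵐ. -/
theorem stmt_9 {n m : ℕ} {E : Type*} [NormedAddCommGroup E] [NormedSpace ℝ E]
    (f : (Fin n → ℝ) → E)
    (D : (r : ℕ) → (Fin r → Fin n) → ((Fin n → ℝ) → E))
    (hD0 : ∀ l : Fin 0 → Fin n, D 0 l = f)
    (hderiv : ∀ r : ℕ, r < m → ∀ l : Fin (r + 1) → Fin n, Monotone l →
      ∀ x : Fin n → ℝ,
        HasLineDerivAt ℝ (D r (l ∘ Fin.castSucc)) (D (r + 1) l x) x
          (Pi.single (l (Fin.last r)) 1))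
    (hcont : ∀ r : ℕ, r ≤ m → ∀ l : Fin r → Fin n, Monotone l → Continuous (D r l)) :
    ContDiff ℝ (m : ℕ∞) f :=
  aux_main m f D hD0 hderiv hcont
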